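/- Let Ω = {1,...,D} be a finite set and let S₁, S₂ be nonempty subsets of Ω. If π is a uniformly random permutation of Ω, then the probability that min(π(S₁)) = min(π(S₂)) equals |S₁ ∩ S₂| / |S₁ ∪ S₂|. -/

import Mathlib

open Finset

private lemma swap_image_eq {D : ℕ} {x y : Fin D} {U : Finset (Fin D)}
    (hx : x ∈ U) (hy : y ∈ U) : U.image (Equiv.swap x y) = U := by
  apply Finset.eq_of_subset_of_card_le
  · intro z hz
    simp only [mem_image] at hz
    obtain ⟨a, ha, rfl⟩ := hz
    rcases eq_or_ne a x with rfl | hax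
    · simpa using hy
    rcases eq_or_ne a y with rfl | hay
    · simpa using hx
    · rwa [Equiv.swap_apply_of_ne_of_ne hax hay]
  · rw [Finset.card_image_of_injective _ (Equiv.injective _)]

/-- Minwise hashing LSH property: for a uniformly random permutation π of {1,...,D},
Pr(min π(S₁) = min π(S₂)) = |S₁ ∩ S₂| / |S₁ ∪ S₂|. -/
theorem minhash_collision_prob (D : ℕ) (hD : 0 < D) (S₁ S₂ : Finset (Fin D))
    (h₁ : S₁.Nonempty) (h₂ : S₂.Nonempty) :
    ((Finset.univ.filter fun π : Equiv.Perm (Fin D) =>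
        (S₁.image π).min' (h₁.image π) = (S₂.image π).min' (h₂.image π)).card : ℝ) /
      (Fintype.card (Equiv.Perm (Fin D))) =
    ((S₁ ∩ S₂).card : ℝ) / ((S₁ ∪ S₂).card) := by
  set U : Finset (Fin D) := S₁ ∪ S₂ with hUdef
  have hUne : U.Nonempty := h₁.mono Finset.subset_union_left
  set f : Equiv.Perm (Fin D) → Fin D :=
    fun π => π.symm ((U.image π).min' (hUne.image π)) with hf
  have hmemiff : ∀ (π : Equiv.Perm (Fin D)) (S : Finset (Fin D)) (z : Fin D),
      z ∈ S.image π ↔ π.symm z ∈ S := by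
    intro π S z
    constructor
    · intro h; simp only [mem_image] at h
      obtain ⟨a, ha, rfl⟩ := h; simpa using ha
    · intro h
      have : π (π.symm z) ∈ S.image π := mem_image_of_mem _ h
      simpa using this
  have hfU : ∀ π, f π ∈ U := by
    intro π
    rw [hf, ← hmemiff]
    exact Finset.min'_mem _ _
  have hcond : ∀ π : Equiv.Perm (Fin D),
      ((S₁.image π).min' (h₁.image π) = (S₂.image π).min' (h₂.image π)) ↔ f π ∈ S₁ ∩ S₂ := by
    intro π
    set m := (U.image π).min' (hUne.image π) with hm
    have hle₁ : m ≤ (S₁.image π).min' (h₁.image π) :=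
      Finset.min'_le _ _ ((Finset.image_subset_image Finset.subset_union_left)
        (Finset.min'_mem _ _))
    have hle₂ : m ≤ (S₂.image π).min' (h₂.image π) :=
      Finset.min'_le _ _ ((Finset.image_subset_image Finset.subset_union_right)
        (Finset.min'_mem _ _))
    have hor : m ∈ S₁.image π ∨ m ∈ S₂.image π := by
      have : m ∈ U.image π := Finset.min'_mem _ _
      rw [hUdef, Finset.image_union, Finset.mem_union] at this
      exact this
    constructor
    · intro heq
      rw [Finset.mem_inter, hf, ← hmemiff, ← hmemiff]
      rcases hor with h | h
      · have e1 : (S₁.image π).min' (h₁.image π) = m :=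
          le_antisymm (Finset.min'_le _ _ h) hle₁
        have e2 : (S₂.image π).min' (h₂.image π) = m := by rw [← heq]; exact e1
        refine ⟨h, ?_⟩
        have := Finset.min'_mem (S₂.image π) (h₂.image π)
        rwa [e2] at this
      · have e2 : (S₂.image π).min' (h₂.image π) = m :=
          le_antisymm (Finset.min'_le _ _ h) hle₂
        have e1 : (S₁.image π).min' (h₁.image π) = m := by rw [heq]; exact e2
        refine ⟨?_, h⟩
        have := Finset.min'_mem (S₁.image π) (h₁.image π)
        rwa [e1] at this
    · intro hin
      rw [Finset.mem_inter, hf, ← hmemiff, ← hmemiff] at hin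
      have e1 : (S₁.image π).min' (h₁.image π) = m :=
        le_antisymm (Finset.min'_le _ _ hin.1) hle₁
      have e2 : (S₂.image π).min' (h₂.image π) = m :=
        le_antisymm (Finset.min'_le _ _ hin.2) hle₂
      rw [e1, e2]
    -- fibers have equal cardinality
  have hswapf : ∀ (x y : Fin D), x ∈ U → y ∈ U → ∀ π : Equiv.Perm (Fin D),
      f (π * Equiv.swap x y) = Equiv.swap x y (f π) := by
    intro x y hx hy π
    have himg : U.image ⇑(π * Equiv.swap x y) = U.image ⇑π := by
      rw [Equiv.Perm.coe_mul, ← Finset.image_image, swap_image_eq hx hy]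
    have hmin : (U.image ⇑(π * Equiv.swap x y)).min' (hUne.image _)
        = (U.image ⇑π).min' (hUne.image π) := by
      congr 1
    have hsymm : (π * Equiv.swap x y).symm = (Equiv.swap x y) * π.symm := by
      rw [← Equiv.Perm.inv_def, mul_inv_rev, Equiv.Perm.inv_def, Equiv.Perm.inv_def,
        Equiv.symm_swap]
    rw [hf]
    simp only [hmin, hsymm, Equiv.Perm.mul_apply]
  have hfiber : ∀ x ∈ U, ∀ y ∈ U,
      (univ.filter fun π => f π = x).card = (univ.filter fun π => f π = y).card := by
    intro x hx y hy
    apply Finset.card_bij' (fun π _ => π * Equiv.swap x y) (fun π _ => π * Equiv.swap x y)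
    · intro π hπ
      simp only [Finset.mem_filter, Finset.mem_univ, true_and] at hπ ⊢
      rw [hswapf x y hx hy π, hπ, Equiv.swap_apply_left]
    · intro π hπ
      simp only [Finset.mem_filter, Finset.mem_univ, true_and] at hπ ⊢
      rw [hswapf x y hx hy π, hπ, Equiv.swap_apply_right]
    · intro π hπ
      rw [mul_assoc, Equiv.swap_mul_self, mul_one]
    · intro π hπ
      rw [mul_assoc, Equiv.swap_mul_self, mul_one]
  obtain ⟨x₀, hx₀⟩ := hUne
  set c : ℕ := (univ.filter fun π => f π = x₀).card with hc
  have hcard1 : Fintype.card (Equiv.Perm (Fin D)) = U.card * c := by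
    rw [← Finset.card_univ,
      Finset.card_eq_sum_card_fiberwise (f := f) (fun π _ => hfU π)]
    rw [Finset.sum_congr rfl (fun x hx => hfiber x hx x₀ hx₀), Finset.sum_const, smul_eq_mul]
  have hIU : S₁ ∩ S₂ ⊆ U := Finset.inter_subset_union
  have hcard2 : (Finset.univ.filter fun π : Equiv.Perm (Fin D) =>
      (S₁.image π).min' (h₁.image π) = (S₂.image π).min' (h₂.image π)).card
      = (S₁ ∩ S₂).card * c := by
    rw [Finset.filter_congr (fun π _ => by rw [hcond π])]
    rw [Finset.card_eq_sum_card_fiberwise (f := f) (t := S₁ ∩ S₂)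
      (s := univ.filter fun π => f π ∈ S₁ ∩ S₂) (fun π hπ => (Finset.mem_filter.mp hπ).2)]
    have hstep : ∀ b ∈ S₁ ∩ S₂,
        ((univ.filter fun π => f π ∈ S₁ ∩ S₂).filter fun π => f π = b).card
        = (univ.filter fun π => f π = b).card := by
      intro b hb
      congr 1
      rw [Finset.filter_filter]
      apply Finset.filter_congr
      intro π _
      constructor
      · exact fun h => h.2
      · exact fun h => ⟨h ▸ hb, h⟩
    rw [Finset.sum_congr rfl hstep,
      Finset.sum_congr rfl (fun x hx => hfiber x (hIU hx) x₀ hx₀),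
      Finset.sum_const, smul_eq_mul]
  have hcpos : (c : ℝ) ≠ 0 := by
    have : 0 < Fintype.card (Equiv.Perm (Fin D)) := Fintype.card_pos
    rw [hcard1] at this
    have : 0 < c := Nat.pos_of_mul_pos_left (by rwa [mul_comm] at this)
    exact_mod_cast this.ne'
  rw [hcard1, hcard2]
  push_cast
  rw [mul_div_mul_right _ _ hcpos]
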